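/- arXiv:0903.4856 — 6 statements merged into one kernel-verified Lean document; each statement's English description precedes it below -/
import Mathlib

section
/- (KKT necessity) Let Q be an n×n symmetric PSD matrix, A an m×n matrix, c ∈ ℝⁿ, b ∈ ℝᵐ. If x ∈ ℝⁿ is an optimal solution of minimize xᵀQx + cᵀx subject to Ax ≥ b, x ≥ 0, then there exists y ∈ ℝᵐ with y ≥ 0, c - Aᵀy + 2Qx ≥ 0, xᵀ(c - Aᵀy + 2Qx) = 0 and yᵀ(Ax - b) = 0. -/
open Matrix

theorem farkas_dichotomy : ∀ (k n : ℕ) (a : Fin k → (Fin n → ℝ)) (g : Fin n → ℝ),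
    (∃ y : Fin k → ℝ, (∀ i, 0 ≤ y i) ∧ ∑ i, y i • a i = g) ∨
    (∃ d : Fin n → ℝ, (∀ i, 0 ≤ a i ⬝ᵥ d) ∧ g ⬝ᵥ d < 0) := by
  intro k
  induction k with
  | zero =>
    intro n a g
    by_cases hg : g = 0
    · exact Or.inl ⟨0, fun i => le_refl 0, by simp [hg]⟩
    · refine Or.inr ⟨-g, fun i => i.elim0, ?_⟩
      have : g ⬝ᵥ g ≠ 0 := by
        simpa [dotProduct_self_eq_zero] using hg
      have h2 : 0 ≤ g ⬝ᵥ g := Finset.sum_nonneg fun i _ => mul_self_nonneg (g i)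
      have : 0 < g ⬝ᵥ g := lt_of_le_of_ne h2 (Ne.symm this)
      simpa [dotProduct_neg] using neg_neg_iff_pos.mpr this
  | succ k ih =>
    intro n a g
    set a' : Fin k → (Fin n → ℝ) := fun i => a i.castSucc with ha'
    set w : Fin n → ℝ := a (Fin.last k) with hw
    rcases ih n a' g with ⟨y, hy, hsum⟩ | ⟨d, hd, hgd⟩
    · left
      refine ⟨Fin.snoc y 0, ?_, ?_⟩
      · intro i
        refine Fin.lastCases ?_ ?_ i
        · simp
        · intro j; simpa using hy j
      · rw [Fin.sum_univ_castSucc]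
        simp [Fin.snoc, hsum]
        exact hsum
    · by_cases hwd : 0 ≤ w ⬝ᵥ d
      · right
        refine ⟨d, ?_, hgd⟩
        intro i
        refine Fin.lastCases ?_ ?_ i
        · exact hwd
        · intro j; exact hd j
      · push_neg at hwd
        set α : ℝ := w ⬝ᵥ d with hα
        have hαne : α ≠ 0 := ne_of_lt hwd
        set bb : Fin k → (Fin n → ℝ) := fun i => a' i - (a' i ⬝ᵥ d / α) • w with hbb
        set h : Fin n → ℝ := g - (g ⬝ᵥ d / α) • w with hh
        rcases ih n bb h with ⟨lam, hlam, hsum⟩ | ⟨e, he, hhe⟩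
        · left
          set μ : ℝ := (g ⬝ᵥ d - ∑ i, lam i * (a' i ⬝ᵥ d)) / α with hμ
          have hμpos : 0 ≤ μ := by
            apply le_of_lt
            apply div_pos_of_neg_of_neg _ hwd
            have : 0 ≤ ∑ i, lam i * (a' i ⬝ᵥ d) :=
              Finset.sum_nonneg fun i _ => mul_nonneg (hlam i) (hd i)
            linarith
          refine ⟨Fin.snoc lam μ, ?_, ?_⟩
          · intro i
            refine Fin.lastCases ?_ ?_ i
            · simpa using hμpos
            · intro j; simpa using hlam j
          · rw [Fin.sum_univ_castSucc]
            simp only [Fin.snoc_castSucc, Fin.snoc_last]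
            have expand : ∑ i, lam i • a' i = h + (∑ i, lam i * (a' i ⬝ᵥ d / α)) • w := by
              rw [← hsum]
              rw [Finset.sum_smul]
              rw [← Finset.sum_add_distrib]
              apply Finset.sum_congr rfl
              intro i _
              rw [hbb]
              simp [smul_sub, smul_smul]
            have : ∑ i, lam i • a i.castSucc = ∑ i, lam i • a' i := rfl
            rw [this, expand, hh]
            funext j
            simp only [Pi.add_apply, Pi.sub_apply, Pi.smul_apply, smul_eq_mul]
            have : ∑ i, lam i * (a' i ⬝ᵥ d / α) = (∑ i, lam i * (a' i ⬝ᵥ d)) / α := by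
              rw [Finset.sum_div]
              apply Finset.sum_congr rfl
              intro i _; ring
            rw [this, hμ]
            field_simp
            ring
        · right
          set d' : Fin n → ℝ := e - (w ⬝ᵥ e / α) • d with hd'
          have key : ∀ u : Fin n → ℝ, u ⬝ᵥ d' = (u - (u ⬝ᵥ d / α) • w) ⬝ᵥ e := by
            intro u
            rw [hd']
            rw [dotProduct_sub, sub_dotProduct, dotProduct_smul,
              smul_dotProduct]
            have : w ⬝ᵥ e = e ⬝ᵥ w := dotProduct_comm w e
            simp only [smul_eq_mul, this]
            ring
          refine ⟨d', ?_, ?_⟩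
          · intro i
            refine Fin.lastCases ?_ ?_ i
            · rw [key w]
              rw [sub_dotProduct, smul_dotProduct]
              simp only [smul_eq_mul]
              rw [← hα, div_self hαne, one_mul, sub_self]
            · intro j
              rw [key (a j.castSucc)]
              exact he j
          · rw [key g]
            exact hhe

theorem farkas_cor (k n : ℕ) (a : Fin k → (Fin n → ℝ)) (g : Fin n → ℝ)
    (H : ∀ d : Fin n → ℝ, (∀ i, 0 ≤ a i ⬝ᵥ d) → 0 ≤ g ⬝ᵥ d) :
    ∃ y : Fin k → ℝ, (∀ i, 0 ≤ y i) ∧ ∑ i, y i • a i = g := by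
  rcases farkas_dichotomy k n a g with h | ⟨d, hd, hgd⟩
  · exact h
  · exact absurd (H d hd) (not_le.mpr hgd)

theorem kkt_necessity (n m : ℕ) (Q : Matrix (Fin n) (Fin n) ℝ)
    (hQsym : Q.IsSymm) (hQ : ∀ z : Fin n → ℝ, 0 ≤ z ⬝ᵥ Q *ᵥ z)
    (A : Matrix (Fin m) (Fin n) ℝ) (c : Fin n → ℝ) (b : Fin m → ℝ)
    (x : Fin n → ℝ)
    (hfeas1 : ∀ i, b i ≤ (A *ᵥ x) i) (hfeas2 : ∀ i, 0 ≤ x i)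
    (hopt : ∀ x' : Fin n → ℝ, (∀ i, b i ≤ (A *ᵥ x') i) → (∀ i, 0 ≤ x' i) →
      x ⬝ᵥ Q *ᵥ x + c ⬝ᵥ x ≤ x' ⬝ᵥ Q *ᵥ x' + c ⬝ᵥ x') :
    ∃ y : Fin m → ℝ, (∀ i, 0 ≤ y i) ∧
      (∀ i, 0 ≤ (c - Aᵀ *ᵥ y + 2 • (Q *ᵥ x)) i) ∧
      x ⬝ᵥ (c - Aᵀ *ᵥ y + 2 • (Q *ᵥ x)) = 0 ∧
      y ⬝ᵥ (A *ᵥ x - b) = 0 := by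
  classical
  set g : Fin n → ℝ := c + 2 • (Q *ᵥ x) with hg
  -- Step 1: directional optimality
  have hkey : ∀ d : Fin n → ℝ,
      (∀ i, (A *ᵥ x) i = b i → 0 ≤ (A *ᵥ d) i) →
      (∀ j, x j = 0 → 0 ≤ d j) →
      0 ≤ g ⬝ᵥ d := by
    intro d hdA hdx
    by_contra hneg
    push_neg at hneg
    set f₁ : Fin n → ℝ := fun j => if d j < 0 then x j / (-(d j)) else 1 with hf₁
    set f₂ : Fin m → ℝ := fun i =>
      if (A *ᵥ d) i < 0 then ((A *ᵥ x) i - b i) / (-((A *ᵥ d) i)) else 1 with hf₂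
    set S : Finset ℝ := insert 1 ((Finset.univ.image f₁) ∪ (Finset.univ.image f₂)) with hS
    have hSne : S.Nonempty := ⟨1, Finset.mem_insert_self 1 _⟩
    have hS_pos : ∀ s ∈ S, 0 < s := by
      intro s hs
      rw [hS] at hs
      rcases Finset.mem_insert.mp hs with rfl | hs
      · norm_num
      rcases Finset.mem_union.mp hs with hs | hs
      · obtain ⟨j, _, rfl⟩ := Finset.mem_image.mp hs
        by_cases hj : d j < 0
        · have hxj : 0 < x j := by
            rcases lt_or_eq_of_le (hfeas2 j) with h | h
            · exact h
            · exact absurd (hdx j h.symm) (not_le.mpr hj)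
          simp only [hf₁, if_pos hj]
          exact div_pos hxj (by linarith)
        · simp only [hf₁, if_neg hj]; norm_num
      · obtain ⟨i, _, rfl⟩ := Finset.mem_image.mp hs
        by_cases hi : (A *ᵥ d) i < 0
        · have hbi : b i < (A *ᵥ x) i := by
            rcases lt_or_eq_of_le (hfeas1 i) with h | h
            · exact h
            · exact absurd (hdA i h.symm) (not_le.mpr hi)
          simp only [hf₂, if_pos hi]
          exact div_pos (by linarith) (by linarith)
        · simp only [hf₂, if_neg hi]; norm_num
    have hε₀pos : 0 < S.min' hSne := hS_pos _ (S.min'_mem hSne)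
    have hdQd : 0 ≤ d ⬝ᵥ Q *ᵥ d := hQ d
    set ε : ℝ := min (S.min' hSne) ((-(g ⬝ᵥ d)) / (2 * (d ⬝ᵥ Q *ᵥ d + 1))) with hε
    have hεpos : 0 < ε := lt_min hε₀pos (div_pos (by linarith) (by linarith))
    have hεle : ∀ s ∈ S, ε ≤ s := fun s hs =>
      le_trans (min_le_left _ _) (S.min'_le s hs)
    set x' : Fin n → ℝ := x + ε • d with hx'
    have hfe2 : ∀ j, 0 ≤ x' j := by
      intro j
      simp only [hx', Pi.add_apply, Pi.smul_apply, smul_eq_mul]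
      by_cases hj : d j < 0
      · have h1 : ε ≤ x j / (-(d j)) := by
          have hm : f₁ j ∈ S := by
            rw [hS]
            exact Finset.mem_insert_of_mem (Finset.mem_union_left _
              (Finset.mem_image_of_mem f₁ (Finset.mem_univ j)))
          have := hεle (f₁ j) hm
          simpa [hf₁, if_pos hj] using this
        have h2 : ε * (-(d j)) ≤ x j := (le_div_iff₀ (by linarith)).mp h1
        linarith
      · push_neg at hj
        nlinarith [hfeas2 j, hεpos.le]
    have hfe1 : ∀ i, b i ≤ (A *ᵥ x') i := by
      intro i
      have hAi : (A *ᵥ x') i = (A *ᵥ x) i + ε * (A *ᵥ d) i := by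
        simp [hx', Matrix.mulVec_add, Matrix.mulVec_smul]
      rw [hAi]
      by_cases hi : (A *ᵥ d) i < 0
      · have hbi : b i < (A *ᵥ x) i := by
          rcases lt_or_eq_of_le (hfeas1 i) with h | h
          · exact h
          · exact absurd (hdA i h.symm) (not_le.mpr hi)
        have h1 : ε ≤ ((A *ᵥ x) i - b i) / (-((A *ᵥ d) i)) := by
          have hm : f₂ i ∈ S := by
            rw [hS]
            exact Finset.mem_insert_of_mem (Finset.mem_union_right _
              (Finset.mem_image_of_mem f₂ (Finset.mem_univ i)))
          have := hεle (f₂ i) hm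
          simpa [hf₂, if_pos hi] using this
        have h2 : ε * (-((A *ᵥ d) i)) ≤ (A *ᵥ x) i - b i := (le_div_iff₀ (by linarith)).mp h1
        linarith
      · push_neg at hi
        nlinarith [hfeas1 i, hεpos.le]
    have hopt' := hopt x' hfe1 hfe2
    have hsym : x ⬝ᵥ Q *ᵥ d = d ⬝ᵥ Q *ᵥ x := by
      rw [Matrix.dotProduct_mulVec, ← Matrix.mulVec_transpose, hQsym.eq, dotProduct_comm]
    have h2 : (Q *ᵥ x) ⬝ᵥ d = d ⬝ᵥ Q *ᵥ x := dotProduct_comm _ _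
    have hexp : x' ⬝ᵥ Q *ᵥ x' + c ⬝ᵥ x' =
        (x ⬝ᵥ Q *ᵥ x + c ⬝ᵥ x) + ε * (g ⬝ᵥ d) + ε ^ 2 * (d ⬝ᵥ Q *ᵥ d) := by
      simp only [hx', hg, Matrix.mulVec_add, Matrix.mulVec_smul, dotProduct_add,
        add_dotProduct, dotProduct_smul, smul_dotProduct, smul_eq_mul]
      linear_combination ε * hsym - 2 * ε * h2
    have hεB : ε * (2 * (d ⬝ᵥ Q *ᵥ d + 1)) ≤ -(g ⬝ᵥ d) :=
      (le_div_iff₀ (by linarith)).mp (min_le_right _ _)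
    nlinarith [mul_le_mul_of_nonneg_left hεB hεpos.le, sq_nonneg ε, mul_pos hεpos hεpos]
  -- Step 2: Farkas
  set row : Fin m → (Fin n → ℝ) := fun i => if (A *ᵥ x) i = b i then A i else 0 with hrow
  set unitv : Fin n → (Fin n → ℝ) := fun j => if x j = 0 then Pi.single j 1 else 0 with hunitv
  obtain ⟨y', hy'nonneg, hy'sum⟩ := farkas_cor (m + n) n (Fin.append row unitv) g (by
    intro d hd
    apply hkey d
    · intro i hi
      have := hd (Fin.castAdd n i)
      rw [Fin.append_left, hrow] at this
      simp only [if_pos hi] at this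
      exact this
    · intro j hj
      have := hd (Fin.natAdd m j)
      rw [Fin.append_right, hunitv] at this
      simp only [if_pos hj] at this
      rwa [single_dotProduct, one_mul] at this)
  rw [Fin.sum_univ_add] at hy'sum
  simp only [Fin.append_left, Fin.append_right] at hy'sum
  set y : Fin m → ℝ := fun i => if (A *ᵥ x) i = b i then y' (Fin.castAdd n i) else 0 with hy
  have hP : ∑ i : Fin m, y' (Fin.castAdd n i) • row i = Aᵀ *ᵥ y := by
    funext j
    rw [Matrix.mulVec]
    simp only [Finset.sum_apply, Pi.smul_apply, smul_eq_mul]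
    rw [dotProduct]
    apply Finset.sum_congr rfl
    intro i _
    by_cases hi : (A *ᵥ x) i = b i
    · simp [hrow, hy, if_pos hi, Matrix.transpose_apply, mul_comm]
    · simp [hrow, hy, if_neg hi]
  have hR : ∀ j, (∑ j' : Fin n, y' (Fin.natAdd m j') • unitv j') j =
      if x j = 0 then y' (Fin.natAdd m j) else 0 := by
    intro j
    simp only [Finset.sum_apply, Pi.smul_apply, smul_eq_mul]
    rw [Finset.sum_eq_single j]
    · by_cases hj : x j = 0
      · simp [hunitv, if_pos hj]
      · simp [hunitv, if_neg hj]
    · intro j' _ hj'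
      by_cases hj : x j' = 0
      · simp [hunitv, if_pos hj, Pi.single_apply, hj']
      · simp [hunitv, if_neg hj]
    · intro h; exact absurd (Finset.mem_univ j) h
  have hynn : ∀ i, 0 ≤ y i := by
    intro i
    rw [hy]
    by_cases hi : (A *ᵥ x) i = b i
    · simp only [if_pos hi]; exact hy'nonneg _
    · simp [if_neg hi]
  have hgdecomp : ∀ j, (c - Aᵀ *ᵥ y + 2 • (Q *ᵥ x)) j =
      if x j = 0 then y' (Fin.natAdd m j) else 0 := by
    intro j
    have : (c - Aᵀ *ᵥ y + 2 • (Q *ᵥ x)) j = g j - (Aᵀ *ᵥ y) j := by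
      simp [hg]; ring
    rw [this, ← hy'sum, ← hP]
    simp only [Pi.add_apply]
    rw [hR j]
    ring
  refine ⟨y, hynn, ?_, ?_, ?_⟩
  · intro j
    rw [hgdecomp j]
    by_cases hj : x j = 0
    · simp only [if_pos hj]; exact hy'nonneg _
    · simp [if_neg hj]
  · rw [dotProduct]
    apply Finset.sum_eq_zero
    intro j _
    rw [hgdecomp j]
    by_cases hj : x j = 0
    · simp [hj]
    · simp [if_neg hj]
  · rw [dotProduct]
    apply Finset.sum_eq_zero
    intro i _
    simp only [Pi.sub_apply]
    by_cases hi : (A *ᵥ x) i = b i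
    · rw [hi]; ring
    · rw [hy]; simp [if_neg hi]
end

section
/- Solvability of the QP is equivalent to solvability of the associated LCP: the quadratic program minimize xᵀQx + cᵀx subject to Ax ≥ b, x ≥ 0 (Q symmetric PSD) has an optimal solution if and only if there exist w, z ∈ ℝ^{n+m} with w - Mz = q, w ≥ 0, z ≥ 0, wᵀz = 0, where M = [[2Q, -Aᵀ], [A, 0]] and q = (c, -b). Moreover, in that case the first n components of z form an optimal solution of the QP. -/
open Matrix

section QpLcpHelpers
open scoped RealInnerProductSpace


lemma cone_carath {E : Type*} [AddCommGroup E] [Module ℝ E] {ι : Type*} [Fintype ι] [DecidableEq ι]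
    (v : ι → E) (x : E) (s : Finset ι)
    (hx : ∃ lam : ι → ℝ, (∀ i, 0 ≤ lam i) ∧ (∀ i ∉ s, lam i = 0) ∧ ∑ i, lam i • v i = x) :
    ∃ t : Finset ι, LinearIndependent ℝ (fun i : t => v i) ∧
      ∃ lam : ι → ℝ, (∀ i, 0 ≤ lam i) ∧ (∀ i ∉ t, lam i = 0) ∧ ∑ i, lam i • v i = x := by
  obtain ⟨k, hk⟩ : ∃ k, s.card = k := ⟨_, rfl⟩
  induction k using Nat.strong_induction_on generalizing s with
  | _ k ih =>
  subst hk
  by_cases hind : LinearIndependent ℝ (fun i : s => v i)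
  · exact ⟨s, hind, hx⟩
  obtain ⟨lam, hlam0, hlams, hlamsum⟩ := hx
  obtain ⟨g, hgsum, i₁, hgne⟩ := Fintype.not_linearIndependent_iff.mp hind
  have key : ∀ G : ι → ℝ, (∀ i ∉ s, G i = 0) → (∑ i, G i • v i = 0) → (∃ i ∈ s, 0 < G i) →
      ∃ t : Finset ι, LinearIndependent ℝ (fun i : t => v i) ∧
        ∃ lam : ι → ℝ, (∀ i, 0 ≤ lam i) ∧ (∀ i ∉ t, lam i = 0) ∧ ∑ i, lam i • v i = x := by
    rintro G hGs hGsum ⟨j, hjs, hjpos⟩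
    have hPne : ((s.filter (fun i => 0 < G i))).Nonempty := ⟨j, Finset.mem_filter.mpr ⟨hjs, hjpos⟩⟩
    obtain ⟨i₀, hi₀P, hi₀min⟩ := Finset.exists_min_image _ (fun i => lam i / G i) hPne
    obtain ⟨hi₀s, hi₀pos⟩ := Finset.mem_filter.mp hi₀P
    set r := lam i₀ / G i₀ with hr
    have hr0 : 0 ≤ r := div_nonneg (hlam0 i₀) hi₀pos.le
    set lam' : ι → ℝ := fun i => lam i - r * G i with hlam'
    have hlam'0 : ∀ i, 0 ≤ lam' i := by
      intro i
      by_cases his : i ∈ s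
      · rcases le_or_gt (G i) 0 with hGi | hGi
        · have : r * G i ≤ 0 := mul_nonpos_of_nonneg_of_nonpos hr0 hGi
          simp only [hlam', sub_nonneg]
          linarith [hlam0 i]
        · have hmin := hi₀min i (Finset.mem_filter.mpr ⟨his, hGi⟩)
          have : r * G i ≤ lam i := by
            rw [hr, div_mul_eq_mul_div, div_le_iff₀ hi₀pos]
            rw [div_le_div_iff₀ hi₀pos hGi] at hmin
            linarith
          simp only [hlam', sub_nonneg]
          exact this
      · simp [hlam', hlams i his, hGs i his]
    have hlam'supp : ∀ i ∉ s.erase i₀, lam' i = 0 := by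
      intro i hi
      rw [Finset.mem_erase] at hi
      push_neg at hi
      by_cases hii : i = i₀
      · subst hii
        simp only [hlam', hr]
        field_simp
        ring
      · simp [hlam', hlams i (hi hii), hGs i (hi hii)]
    have hsum' : ∑ i, lam' i • v i = x := by
      simp only [hlam', sub_smul, Finset.sum_sub_distrib, hlamsum, mul_smul, ← Finset.smul_sum,
        hGsum, smul_zero, sub_zero]
    exact ih (s.erase i₀).card (Finset.card_erase_lt_of_mem hi₀s) (s.erase i₀)
      ⟨lam', hlam'0, hlam'supp, hsum'⟩ rfl
  set G : ι → ℝ := fun i => if h : i ∈ s then g ⟨i, h⟩ else 0 with hG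
  have hGsupp : ∀ i ∉ s, G i = 0 := fun i hi => by simp [hG, dif_neg hi]
  have hGsum : ∑ i, G i • v i = 0 := by
    rw [← Finset.sum_subset (Finset.subset_univ s) (fun i _ hi => by simp [hG, dif_neg hi]),
      ← Finset.sum_attach s (fun i => G i • v i), ← hgsum]
    exact Finset.sum_congr rfl (fun i _ => by simp [hG, dif_pos i.2])
  have hGneg : ∀ i ∉ s, (-G) i = 0 := fun i hi => by simp [hGsupp i hi]
  have hGnegsum : ∑ i, (-G) i • v i = 0 := by
    simp only [Pi.neg_apply, neg_smul, Finset.sum_neg_distrib, hGsum, neg_zero]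
  rcases lt_trichotomy (g i₁) 0 with h | h | h
  · exact key (-G) hGneg hGnegsum ⟨i₁, i₁.2, by simp [hG, dif_pos i₁.2]; linarith⟩
  · exact absurd h hgne
  · exact key G hGsupp hGsum ⟨i₁, i₁.2, by simp [hG, dif_pos i₁.2]; linarith⟩

lemma cone_closed {N : ℕ} {ι : Type} [Fintype ι] [DecidableEq ι]
    (v : ι → EuclideanSpace ℝ (Fin N)) :
    IsClosed {x : EuclideanSpace ℝ (Fin N) | ∃ lam : ι → ℝ, (∀ i, 0 ≤ lam i) ∧ ∑ i, lam i • v i = x} := by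
  have heq : {x : EuclideanSpace ℝ (Fin N) | ∃ lam : ι → ℝ, (∀ i, 0 ≤ lam i) ∧ ∑ i, lam i • v i = x}
      = ⋃ t : Finset ι, {x | LinearIndependent ℝ (fun i : t => v i) ∧
          ∃ lam : ι → ℝ, (∀ i, 0 ≤ lam i) ∧ (∀ i ∉ t, lam i = 0) ∧ ∑ i, lam i • v i = x} := by
    ext x
    simp only [Set.mem_setOf_eq, Set.mem_iUnion]
    constructor
    · rintro ⟨lam, h0, hsum⟩
      obtain ⟨t, hind, lam', h⟩ := cone_carath v x Finset.univ ⟨lam, h0, by simp, hsum⟩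
      exact ⟨t, hind, lam', h⟩
    · rintro ⟨t, _, lam, h0, _, hsum⟩
      exact ⟨lam, h0, hsum⟩
  rw [heq]
  apply isClosed_iUnion_of_finite
  intro t
  by_cases hind : LinearIndependent ℝ (fun i : t => v i)
  · set T : (↥t → ℝ) →ₗ[ℝ] EuclideanSpace ℝ (Fin N) :=
      Fintype.linearCombination ℝ (fun i : t => v i) with hT
    have hker : LinearMap.ker T = ⊥ := by
      rw [LinearMap.ker_eq_bot']
      intro g hg
      funext i
      exact Fintype.linearIndependent_iff.mp hind g
        (by rwa [hT, Fintype.linearCombination_apply] at hg) i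
    have hceq : {x : EuclideanSpace ℝ (Fin N) | LinearIndependent ℝ (fun i : t => v i) ∧
          ∃ lam : ι → ℝ, (∀ i, 0 ≤ lam i) ∧ (∀ i ∉ t, lam i = 0) ∧ ∑ i, lam i • v i = x}
        = T '' {mu : ↥t → ℝ | ∀ i, 0 ≤ mu i} := by
      ext x
      simp only [Set.mem_setOf_eq, Set.mem_image]
      constructor
      · rintro ⟨-, lam, h0, hsupp, hsum⟩
        refine ⟨fun i => lam i, fun i => h0 i, ?_⟩
        rw [hT, Fintype.linearCombination_apply, ← hsum]
        rw [← Finset.sum_subset (Finset.subset_univ t) (fun i _ hi => by simp [hsupp i hi]),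
          ← Finset.sum_attach t (fun i => lam i • v i)]
        rfl
      · rintro ⟨mu, hmu, hx⟩
        refine ⟨hind, fun i => if h : i ∈ t then mu ⟨i, h⟩ else 0, ?_, ?_, ?_⟩
        · intro i
          by_cases h : i ∈ t
          · simpa [dif_pos h] using hmu ⟨i, h⟩
          · simp [dif_neg h]
        · intro i hi; simp [dif_neg hi]
        · rw [← hx, hT, Fintype.linearCombination_apply]
          rw [← Finset.sum_subset (Finset.subset_univ t) (fun i _ hi => by simp [dif_neg hi]),
            ← Finset.sum_attach t (fun i => (if h : i ∈ t then mu ⟨i, h⟩ else 0) • v i)]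
          exact Finset.sum_congr rfl (fun i _ => by simp [dif_pos i.2])
    rw [hceq]
    have hclosed : IsClosed {mu : ↥t → ℝ | ∀ i, 0 ≤ mu i} := by
      have : {mu : ↥t → ℝ | ∀ i, 0 ≤ mu i} = ⋂ i, {mu | 0 ≤ mu i} := by
        ext; simp [Set.mem_iInter]
      rw [this]
      exact isClosed_iInter fun i => isClosed_le continuous_const (continuous_apply i)
    exact (T.isClosedEmbedding_of_injective hker).isClosedMap _ hclosed
  · convert isClosed_empty
    ext x
    simp [hind]

lemma farkas {N : ℕ} {ι : Type} [Fintype ι] [DecidableEq ι] (v : ι → (Fin N → ℝ)) (d : Fin N → ℝ)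
    (h : ∀ y : Fin N → ℝ, (∀ i, 0 ≤ dotProduct (v i) y) → 0 ≤ dotProduct d y) :
    ∃ lam : ι → ℝ, (∀ i, 0 ≤ lam i) ∧ ∀ k, d k = ∑ i, lam i * v i k := by
  classical
  set v' : ι → EuclideanSpace ℝ (Fin N) := fun i => WithLp.toLp 2 (v i) with hv'
  set C : Set (EuclideanSpace ℝ (Fin N)) := {x | ∃ lam : ι → ℝ, (∀ i, 0 ≤ lam i) ∧ ∑ i, lam i • v' i = x} with hC
  have hdotE : ∀ x y : EuclideanSpace ℝ (Fin N), (inner ℝ x y : ℝ) = dotProduct (fun k => x k) (fun k => y k) := by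
    intro x y
    rw [PiLp.inner_apply]
    simp [dotProduct, RCLike.inner_apply, mul_comm]
  by_cases hd : (WithLp.toLp 2 d : EuclideanSpace ℝ (Fin N)) ∈ C
  · obtain ⟨lam, hlam0, hsum⟩ := hd
    refine ⟨lam, hlam0, fun k => ?_⟩
    have : (∑ i, lam i • v' i) k = d k := congrArg (fun z : EuclideanSpace ℝ (Fin N) => z k) hsum
    rw [← this]
    simp [hv']
  · exfalso
    set K : ConvexCone ℝ (EuclideanSpace ℝ (Fin N)) :=
      { carrier := C
        smul_mem' := by
          rintro c hc x ⟨lam, hlam0, hsum⟩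
          exact ⟨fun i => c * lam i, fun i => mul_nonneg hc.le (hlam0 i),
            by rw [← hsum, Finset.smul_sum]; exact Finset.sum_congr rfl fun i _ => (smul_smul c (lam i) (v' i)).symm⟩
        add_mem' := by
          rintro x ⟨lam, hlam0, hsum⟩ y ⟨mu, hmu0, hsum'⟩
          exact ⟨fun i => lam i + mu i, fun i => add_nonneg (hlam0 i) (hmu0 i),
            by rw [← hsum, ← hsum', ← Finset.sum_add_distrib]
               exact Finset.sum_congr rfl fun i _ => add_smul (lam i) (mu i) (v' i)⟩ } with hK
    have hne : (K : Set (EuclideanSpace ℝ (Fin N))).Nonempty := ⟨0, ⟨fun _ => 0, fun i => le_refl 0, by simp⟩⟩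
    have hcl : IsClosed (K : Set (EuclideanSpace ℝ (Fin N))) := cone_closed v'
    obtain ⟨y, hy1, hy2⟩ :=
      ProperCone.hyperplane_separation' (x₀ := WithLp.toLp 2 d)
        ⟨K.toPointedCone (ConvexCone.Pointed.of_nonempty_of_isClosed hne hcl), hcl⟩ hd
    have hvy : ∀ i, 0 ≤ dotProduct (v i) (fun k => y k) := by
      intro i
      have hmem : v' i ∈ K := by
        refine ⟨Pi.single i 1, fun j => by by_cases hj : j = i <;> simp [Pi.single_apply, hj], ?_⟩
        rw [Finset.sum_eq_single i (fun j _ hj => by simp [Pi.single_apply, hj]) (by simp)]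
        simp
      have := hy1 _ hmem
      rwa [hdotE] at this
    have hdy := h (fun k => y k) hvy
    rw [hdotE] at hy2
    exact absurd hy2 (not_lt.mpr hdy)

lemma sum_dite_subtype {α : Type*} [Fintype α] (p : α → Prop) [DecidablePred p]
    (f : {a // p a} → ℝ) :
    ∑ a : {a // p a}, f a = ∑ a : α, (if h : p a then f ⟨a, h⟩ else 0) := by
  classical
  rw [← Finset.sum_filter_of_ne (s := Finset.univ) (p := p)
    (f := fun a => if h : p a then f ⟨a, h⟩ else 0) (fun x _ hx => by
      by_contra hp; exact hx (dif_neg hp))]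
  rw [← Finset.sum_subtype_eq_sum_filter (fun a => if h : p a then f ⟨a, h⟩ else 0) (s := Finset.univ)]
  rw [Finset.subtype_univ]
  exact Finset.sum_congr rfl (fun a _ => by rw [dif_pos a.2])


end QpLcpHelpers

set_option maxHeartbeats 2000000 in
theorem qp_lcp_equivalence (n m : ℕ) (Q : Matrix (Fin n) (Fin n) ℝ)
    (hQsym : Q.IsSymm) (hQ : ∀ z : Fin n → ℝ, 0 ≤ z ⬝ᵥ Q *ᵥ z)
    (A : Matrix (Fin m) (Fin n) ℝ) (c : Fin n → ℝ) (b : Fin m → ℝ)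
    (M : Matrix (Fin n ⊕ Fin m) (Fin n ⊕ Fin m) ℝ)
    (hM : M = Matrix.fromBlocks (2 • Q) (-Aᵀ) A 0)
    (q : Fin n ⊕ Fin m → ℝ) (hq : q = Sum.elim c (-b)) :
    ((∃ x : Fin n → ℝ, (∀ i, b i ≤ (A *ᵥ x) i) ∧ (∀ i, 0 ≤ x i) ∧
        ∀ x' : Fin n → ℝ, (∀ i, b i ≤ (A *ᵥ x') i) → (∀ i, 0 ≤ x' i) →
          x ⬝ᵥ Q *ᵥ x + c ⬝ᵥ x ≤ x' ⬝ᵥ Q *ᵥ x' + c ⬝ᵥ x')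
      ↔
      (∃ w z : Fin n ⊕ Fin m → ℝ, w - M *ᵥ z = q ∧
        (∀ i, 0 ≤ w i) ∧ (∀ i, 0 ≤ z i) ∧ w ⬝ᵥ z = 0))
    ∧
    (∀ w z : Fin n ⊕ Fin m → ℝ, w - M *ᵥ z = q →
      (∀ i, 0 ≤ w i) → (∀ i, 0 ≤ z i) → w ⬝ᵥ z = 0 →
      (let x := fun i => z (Sum.inl i)
       (∀ i, b i ≤ (A *ᵥ x) i) ∧ (∀ i, 0 ≤ x i) ∧
        ∀ x' : Fin n → ℝ, (∀ i, b i ≤ (A *ᵥ x') i) → (∀ i, 0 ≤ x' i) →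
          x ⬝ᵥ Q *ᵥ x + c ⬝ᵥ x ≤ x' ⬝ᵥ Q *ᵥ x' + c ⬝ᵥ x')) := by
  classical
  have hsd : ∀ a v : Fin n → ℝ, a ⬝ᵥ Q *ᵥ v = v ⬝ᵥ Q *ᵥ a := by
    intro a v
    rw [Matrix.dotProduct_mulVec, ← Matrix.vecMul_transpose, hQsym.eq, dotProduct_comm]
  -- Part 2: an LCP solution gives an optimal solution
  have hmain : ∀ w z : Fin n ⊕ Fin m → ℝ, w - M *ᵥ z = q →
      (∀ i, 0 ≤ w i) → (∀ i, 0 ≤ z i) → w ⬝ᵥ z = 0 →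
      ((∀ i, b i ≤ (A *ᵥ (fun i => z (Sum.inl i))) i) ∧ (∀ i, 0 ≤ z (Sum.inl i)) ∧
        ∀ x' : Fin n → ℝ, (∀ i, b i ≤ (A *ᵥ x') i) → (∀ i, 0 ≤ x' i) →
          (fun i => z (Sum.inl i)) ⬝ᵥ Q *ᵥ (fun i => z (Sum.inl i)) +
            c ⬝ᵥ (fun i => z (Sum.inl i)) ≤ x' ⬝ᵥ Q *ᵥ x' + c ⬝ᵥ x') := by
    intro w z h1 hw hz hwz
    set x : Fin n → ℝ := fun i => z (Sum.inl i) with hxdef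
    set u : Fin m → ℝ := fun j => z (Sum.inr j) with hudef
    have hw' : w = M *ᵥ z + q := by rw [← h1]; funext k; simp
    have hMzl : ∀ i, (M *ᵥ z) (Sum.inl i) = (Q *ᵥ x) i + (Q *ᵥ x) i - (Aᵀ *ᵥ u) i := by
      intro i
      rw [hM, Matrix.fromBlocks_mulVec]
      show ((2 • Q) *ᵥ (z ∘ Sum.inl)) i + ((-Aᵀ) *ᵥ (z ∘ Sum.inr)) i = _
      rw [two_smul, Matrix.add_mulVec, Matrix.neg_mulVec]
      show (Q *ᵥ (z ∘ Sum.inl)) i + (Q *ᵥ (z ∘ Sum.inl)) i + (-(Aᵀ *ᵥ (z ∘ Sum.inr))) i = _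
      have h1' : z ∘ Sum.inl = x := rfl
      have h2' : z ∘ Sum.inr = u := rfl
      rw [h1', h2']
      simp [sub_eq_add_neg]
    have hMzr : ∀ j, (M *ᵥ z) (Sum.inr j) = (A *ᵥ x) j := by
      intro j
      rw [hM, Matrix.fromBlocks_mulVec]
      show (A *ᵥ (z ∘ Sum.inl)) j + ((0 : Matrix (Fin m) (Fin m) ℝ) *ᵥ (z ∘ Sum.inr)) j = _
      have h1' : z ∘ Sum.inl = x := rfl
      rw [h1', Matrix.zero_mulVec]
      simp
    have hwn : ∀ i, w (Sum.inl i) = (Q *ᵥ x) i + (Q *ᵥ x) i - (Aᵀ *ᵥ u) i + c i := by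
      intro i
      rw [hw']
      show (M *ᵥ z) (Sum.inl i) + q (Sum.inl i) = _
      rw [hMzl i, hq]
      simp
    have hwm : ∀ j, w (Sum.inr j) = (A *ᵥ x) j - b j := by
      intro j
      rw [hw']
      show (M *ᵥ z) (Sum.inr j) + q (Sum.inr j) = _
      rw [hMzr j, hq]
      simp [sub_eq_add_neg]
    have hterm : ∀ k, w k * z k = 0 := by
      have h0 : ∑ k, w k * z k = 0 := hwz
      have := (Finset.sum_eq_zero_iff_of_nonneg
        (fun k _ => mul_nonneg (hw k) (hz k))).mp h0
      exact fun k => this k (Finset.mem_univ k)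
    have hfA : ∀ j, b j ≤ (A *ᵥ x) j := by
      intro j
      have := hw (Sum.inr j)
      rw [hwm j] at this
      linarith
    have hfx : ∀ i, 0 ≤ x i := fun i => hz (Sum.inl i)
    refine ⟨hfA, hfx, ?_⟩
    intro x' hA' hx'
    set h' : Fin n → ℝ := x' - x with hh'
    have hxp : x' = x + h' := by funext i; simp [hh']
    have key1 : x' ⬝ᵥ Q *ᵥ x' =
        x ⬝ᵥ Q *ᵥ x + x ⬝ᵥ Q *ᵥ h' + h' ⬝ᵥ Q *ᵥ x + h' ⬝ᵥ Q *ᵥ h' := by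
      rw [hxp, Matrix.mulVec_add, add_dotProduct, dotProduct_add,
        dotProduct_add]
      ring
    have key2 : c ⬝ᵥ x' = c ⬝ᵥ x + c ⬝ᵥ h' := by rw [hxp, dotProduct_add]
    have hpsd : 0 ≤ h' ⬝ᵥ Q *ᵥ h' := hQ h'
    have hsym1 : h' ⬝ᵥ Q *ᵥ x = x ⬝ᵥ Q *ᵥ h' := hsd h' x
    set wn : Fin n → ℝ := fun i => w (Sum.inl i) with hwndef
    have hwnfun : wn = Q *ᵥ x + Q *ᵥ x - Aᵀ *ᵥ u + c := by
      funext i; exact hwn i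
    have e1 : wn ⬝ᵥ h' = (Q *ᵥ x) ⬝ᵥ h' + (Q *ᵥ x) ⬝ᵥ h' - (Aᵀ *ᵥ u) ⬝ᵥ h' + c ⬝ᵥ h' := by
      rw [hwnfun, add_dotProduct, sub_dotProduct, add_dotProduct]
    have e2 : (Q *ᵥ x) ⬝ᵥ h' = x ⬝ᵥ Q *ᵥ h' := by
      rw [dotProduct_comm, hsd h' x]
    have e3 : (Aᵀ *ᵥ u) ⬝ᵥ h' = u ⬝ᵥ (A *ᵥ h') := by
      rw [Matrix.mulVec_transpose, ← Matrix.dotProduct_mulVec]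
    have e4 : u ⬝ᵥ (A *ᵥ h') = u ⬝ᵥ (A *ᵥ x') - u ⬝ᵥ (A *ᵥ x) := by
      rw [hh', Matrix.mulVec_sub, dotProduct_sub]
    have e5 : u ⬝ᵥ (A *ᵥ x) = u ⬝ᵥ b := by
      have hz0 : ∀ j, u j * ((A *ᵥ x) j - b j) = 0 := by
        intro j
        have := hterm (Sum.inr j)
        rw [hwm j] at this
        linarith [this]
      have : u ⬝ᵥ (A *ᵥ x) - u ⬝ᵥ b = ∑ j, u j * ((A *ᵥ x) j - b j) := by
        show (∑ j, u j * (A *ᵥ x) j) - ∑ j, u j * b j = _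
        rw [← Finset.sum_sub_distrib]
        exact Finset.sum_congr rfl fun j _ => by ring
      have h0 : u ⬝ᵥ (A *ᵥ x) - u ⬝ᵥ b = 0 := by
        rw [this]; exact Finset.sum_eq_zero fun j _ => hz0 j
      linarith
    have e6 : u ⬝ᵥ b ≤ u ⬝ᵥ (A *ᵥ x') :=
      Finset.sum_le_sum fun j _ => mul_le_mul_of_nonneg_left (hA' j) (hz (Sum.inr j))
    have e7 : wn ⬝ᵥ h' = wn ⬝ᵥ x' - wn ⬝ᵥ x := by
      rw [hh', dotProduct_sub]
    have e8 : wn ⬝ᵥ x = 0 :=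
      Finset.sum_eq_zero fun i _ => hterm (Sum.inl i)
    have e9 : 0 ≤ wn ⬝ᵥ x' :=
      Finset.sum_nonneg fun i _ => mul_nonneg (hw (Sum.inl i)) (hx' i)
    linarith
  refine ⟨⟨?_, ?_⟩, fun w z h1 h2 h3 h4 => hmain w z h1 h2 h3 h4⟩
  · -- hard direction : QP optimum gives LCP solution
    rintro ⟨x, hfA, hfx, hopt⟩
    set d : Fin n → ℝ := Q *ᵥ x + Q *ᵥ x + c with hd
    have stepA : ∀ y : Fin n → ℝ, (∀ j, (A *ᵥ x) j = b j → 0 ≤ (A *ᵥ y) j) →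
        (∀ i, x i = 0 → 0 ≤ y i) → 0 ≤ d ⬝ᵥ y := by
      intro y hyA hyx
      set F : Fin n ⊕ Fin m → ℝ := Sum.elim
        (fun i => if x i = 0 then 1 else x i / (|y i| + 1))
        (fun j => if (A *ᵥ x) j = b j then 1
          else ((A *ᵥ x) j - b j) / (|(A *ᵥ y) j| + 1)) with hF
      have hFpos : ∀ k, 0 < F k := by
        intro k
        cases k with
        | inl i =>
          by_cases h : x i = 0
          · simp [hF, h]
          · have hxi : 0 < x i := lt_of_le_of_ne (hfx i) (Ne.symm h)
            simp only [hF, Sum.elim_inl, if_neg h]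
            positivity
        | inr j =>
          by_cases h : (A *ᵥ x) j = b j
          · simp [hF, h]
          · have hsl : 0 < (A *ᵥ x) j - b j := by
              have := hfA j
              rcases lt_or_eq_of_le this with h' | h'
              · linarith
              · exact absurd h'.symm h
            simp only [hF, Sum.elim_inr, if_neg h]
            positivity
      set S : Finset ℝ := insert 1 (Finset.image F Finset.univ) with hS
      have hSne : S.Nonempty := ⟨1, Finset.mem_insert_self 1 _⟩
      set t := S.min' hSne with ht
      have ht0 : 0 < t := by
        have hmem : S.min' hSne ∈ insert 1 (Finset.image F Finset.univ) := S.min'_mem hSne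
        rcases Finset.mem_insert.mp hmem with h | h
        · rw [ht, h]; norm_num
        · obtain ⟨k, -, hk⟩ := Finset.mem_image.mp h
          rw [ht, ← hk]; exact hFpos k
      have htle : ∀ k, t ≤ F k := fun k => Finset.min'_le _ _
        (by rw [hS]; exact Finset.mem_insert_of_mem (Finset.mem_image_of_mem F (Finset.mem_univ k)))
      have ht1 : t ≤ 1 := Finset.min'_le _ _ (by rw [hS]; exact Finset.mem_insert_self 1 _)
      have hfeast : ∀ t' : ℝ, 0 < t' → t' ≤ t →
          (∀ j, b j ≤ (A *ᵥ (x + t' • y)) j) ∧ (∀ i, 0 ≤ (x + t' • y) i) := by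
        intro t' ht' htt'
        constructor
        · intro j
          have hAj : (A *ᵥ (x + t' • y)) j = (A *ᵥ x) j + t' * (A *ᵥ y) j := by
            rw [Matrix.mulVec_add, Matrix.mulVec_smul]
            simp
          rw [hAj]
          by_cases h : (A *ᵥ x) j = b j
          · have := hyA j h
            nlinarith
          · have hFj := le_trans htt' (htle (Sum.inr j))
            simp only [hF, Sum.elim_inr, if_neg h] at hFj
            have hsl : 0 < (A *ᵥ x) j - b j := by
              have := hfA j
              rcases lt_or_eq_of_le this with h' | h'
              · linarith
              · exact absurd h'.symm h
            rw [le_div_iff₀ (by positivity)] at hFj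
            nlinarith [mul_le_mul_of_nonneg_left (neg_abs_le ((A *ᵥ y) j)) ht'.le]
        · intro i
          have : (x + t' • y) i = x i + t' * y i := rfl
          rw [this]
          by_cases h : x i = 0
          · have := hyx i h
            nlinarith
          · have hFi := le_trans htt' (htle (Sum.inl i))
            simp only [hF, Sum.elim_inl, if_neg h] at hFi
            have hxi : 0 < x i := lt_of_le_of_ne (hfx i) (Ne.symm h)
            rw [le_div_iff₀ (by positivity)] at hFi
            nlinarith [mul_le_mul_of_nonneg_left (neg_abs_le (y i)) ht'.le]
      have hineq : ∀ t' : ℝ, 0 < t' → t' ≤ t → 0 ≤ d ⬝ᵥ y + t' * (y ⬝ᵥ Q *ᵥ y) := by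
        intro t' h1 h2
        obtain ⟨hfj, hfi⟩ := hfeast t' h1 h2
        have hle := hopt (x + t' • y) hfj hfi
        have eA : (x + t' • y) ⬝ᵥ Q *ᵥ (x + t' • y) =
            x ⬝ᵥ Q *ᵥ x + t' * (x ⬝ᵥ Q *ᵥ y) + t' * (y ⬝ᵥ Q *ᵥ x) +
              t' * (t' * (y ⬝ᵥ Q *ᵥ y)) := by
          rw [Matrix.mulVec_add, Matrix.mulVec_smul, add_dotProduct,
            smul_dotProduct, dotProduct_add, dotProduct_add,
            dotProduct_smul, dotProduct_smul]
          simp only [smul_eq_mul]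
          ring
        have eB : c ⬝ᵥ (x + t' • y) = c ⬝ᵥ x + t' * (c ⬝ᵥ y) := by
          rw [dotProduct_add, dotProduct_smul]
          simp only [smul_eq_mul]
        have eC : d ⬝ᵥ y = y ⬝ᵥ Q *ᵥ x + y ⬝ᵥ Q *ᵥ x + c ⬝ᵥ y := by
          rw [hd, add_dotProduct, add_dotProduct, dotProduct_comm ((Q : Matrix (Fin n) (Fin n) ℝ) *ᵥ x) y]
        have hsym1 : x ⬝ᵥ Q *ᵥ y = y ⬝ᵥ Q *ᵥ x := hsd x y
        have hK : 0 ≤ t' * (d ⬝ᵥ y + t' * (y ⬝ᵥ Q *ᵥ y)) := by nlinarith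
        nlinarith
      by_contra hneg
      push_neg at hneg
      set s := y ⬝ᵥ Q *ᵥ y with hs'
      have hs : 0 ≤ s := hQ y
      set t' := min t (-(d ⬝ᵥ y) / (2 * (s + 1))) with ht'
      have ht'pos : 0 < t' := lt_min ht0 (div_pos (by linarith) (by linarith))
      have h2 := hineq t' ht'pos (min_le_left _ _)
      have h3 : t' ≤ -(d ⬝ᵥ y) / (2 * (s + 1)) := min_le_right _ _
      rw [le_div_iff₀ (by linarith)] at h3
      nlinarith [mul_nonneg ht'pos.le hs]
    -- Step B : Farkas
    set vg : ({j : Fin m // (A *ᵥ x) j = b j} ⊕ {i : Fin n // x i = 0}) → (Fin n → ℝ) :=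
      Sum.elim (fun j => fun k => A j.1 k) (fun i => Pi.single i.1 1) with hvg
    obtain ⟨lam, hlam0, hlamd⟩ := farkas vg d (by
      intro y hy
      apply stepA y
      · intro j hj
        exact hy (Sum.inl ⟨j, hj⟩)
      · intro i hi
        have := hy (Sum.inr ⟨i, hi⟩)
        rw [hvg] at this
        simp only [Sum.elim_inr] at this
        rwa [single_dotProduct, one_mul] at this)
    set u : Fin m → ℝ := fun j => if h : (A *ᵥ x) j = b j then lam (Sum.inl ⟨j, h⟩) else 0
      with hu
    set vv : Fin n → ℝ := fun i => if h : x i = 0 then lam (Sum.inr ⟨i, h⟩) else 0 with hvv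
    have hu0 : ∀ j, 0 ≤ u j := by
      intro j; rw [hu]
      by_cases h : (A *ᵥ x) j = b j
      · simp only [dif_pos h]; exact hlam0 _
      · simp only [dif_neg h]; exact le_refl 0
    have hvv0 : ∀ i, 0 ≤ vv i := by
      intro i; rw [hvv]
      by_cases h : x i = 0
      · simp only [dif_pos h]; exact hlam0 _
      · simp only [dif_neg h]; exact le_refl 0
    have hdecomp : ∀ k, d k = (Aᵀ *ᵥ u) k + vv k := by
      intro k
      rw [hlamd k, Fintype.sum_sum_type]
      congr 1
      · have hAu : (Aᵀ *ᵥ u) k = ∑ j : Fin m, A j k * u j := by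
          show ∑ j, Aᵀ k j * u j = _
          exact Finset.sum_congr rfl fun j _ => by rw [Matrix.transpose_apply]
        rw [hAu, sum_dite_subtype (fun j => (A *ᵥ x) j = b j)
          (fun j => lam (Sum.inl j) * vg (Sum.inl j) k)]
        refine Finset.sum_congr rfl fun j _ => ?_
        by_cases h : (A *ᵥ x) j = b j
        · rw [dif_pos h, hu]
          simp only [dif_pos h, hvg, Sum.elim_inl]
          ring
        · rw [dif_neg h, hu]
          simp only [dif_neg h, mul_zero]
      · rw [sum_dite_subtype (fun i => x i = 0)
          (fun i => lam (Sum.inr i) * vg (Sum.inr i) k)]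
        have : ∀ i : Fin n, (if h : x i = 0 then
            lam (Sum.inr ⟨i, h⟩) * vg (Sum.inr ⟨i, h⟩) k else 0) = vv i * (Pi.single i (1:ℝ) : Fin n → ℝ) k := by
          intro i
          by_cases h : x i = 0
          · rw [dif_pos h, hvv]
            simp only [dif_pos h, hvg, Sum.elim_inr]
          · rw [dif_neg h, hvv]
            simp only [dif_neg h, zero_mul]
        rw [Finset.sum_congr rfl fun i _ => this i]
        simp [Pi.single_apply]
    have hucomp : ∀ j, ((A *ᵥ x) j - b j) * u j = 0 := by
      intro j
      by_cases h : (A *ᵥ x) j = b j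
      · rw [h]; ring
      · rw [hu]; simp only [dif_neg h, mul_zero]
    have hvcomp : ∀ i, vv i * x i = 0 := by
      intro i
      by_cases h : x i = 0
      · rw [h, mul_zero]
      · rw [hvv]; simp only [dif_neg h, zero_mul]
    refine ⟨Sum.elim vv (A *ᵥ x - b), Sum.elim x u, ?_, ?_, ?_, ?_⟩
    · funext k
      have hMz : M *ᵥ Sum.elim x u = Sum.elim ((2 • Q) *ᵥ x + (-Aᵀ) *ᵥ u) (A *ᵥ x + 0 *ᵥ u) := by
        rw [hM, Matrix.fromBlocks_mulVec]
        rfl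
      cases k with
      | inl i =>
        show vv i - (M *ᵥ Sum.elim x u) (Sum.inl i) = q (Sum.inl i)
        rw [hMz, hq]
        show vv i - (((2 • Q) *ᵥ x) i + ((-Aᵀ) *ᵥ u) i) = c i
        rw [two_smul, Matrix.add_mulVec, Matrix.neg_mulVec]
        have hdi : d i = (Q *ᵥ x) i + (Q *ᵥ x) i + c i := rfl
        have := hdecomp i
        rw [hdi] at this
        show vv i - (((Q *ᵥ x) i + (Q *ᵥ x) i) + (-(Aᵀ *ᵥ u)) i) = c i
        simp only [Pi.neg_apply]
        linarith
      | inr j =>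
        show (A *ᵥ x - b) j - (M *ᵥ Sum.elim x u) (Sum.inr j) = q (Sum.inr j)
        rw [hMz, hq]
        show (A *ᵥ x) j - b j - ((A *ᵥ x) j + (0 *ᵥ u) j) = -b j
        rw [Matrix.zero_mulVec]
        simp
    · intro k
      cases k with
      | inl i => exact hvv0 i
      | inr j => have := hfA j; show 0 ≤ (A *ᵥ x) j - b j; linarith
    · intro k
      cases k with
      | inl i => exact hfx i
      | inr j => exact hu0 j
    · show ∑ k, Sum.elim vv (A *ᵥ x - b) k * Sum.elim x u k = 0
      rw [Fintype.sum_sum_type]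
      have hl : ∑ i : Fin n, Sum.elim vv (A *ᵥ x - b) (Sum.inl i) * Sum.elim x u (Sum.inl i) = 0 :=
        Finset.sum_eq_zero fun i _ => hvcomp i
      have hr : ∑ j : Fin m, Sum.elim vv (A *ᵥ x - b) (Sum.inr j) * Sum.elim x u (Sum.inr j) = 0 :=
        Finset.sum_eq_zero fun j _ => hucomp j
      rw [hl, hr, add_zero]
  · rintro ⟨w, z, h1, h2, h3, h4⟩
    obtain ⟨hf1, hf2, hf3⟩ := hmain w z h1 h2 h3 h4
    exact ⟨fun i => z (Sum.inl i), hf1, hf2, hf3⟩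
end

section
/- (Convexity of LCP solution set for PSD matrices, Adler–Gale) For a positive semidefinite matrix M and fixed q, the set of vectors z ≥ 0 such that (q + Mz, z) solves the LCP (i.e., q + Mz ≥ 0 and zᵀ(q + Mz) = 0) is convex. -/
open Matrix

theorem lcp_solution_set_convex (k : ℕ) (M : Matrix (Fin k) (Fin k) ℝ)
    (hM : ∀ z : Fin k → ℝ, 0 ≤ z ⬝ᵥ M *ᵥ z) (q : Fin k → ℝ) :
    Convex ℝ {z : Fin k → ℝ | (∀ i, 0 ≤ z i) ∧ (∀ i, 0 ≤ (q + M *ᵥ z) i) ∧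
      z ⬝ᵥ (q + M *ᵥ z) = 0} := by
  rintro x ⟨hx0, hxw, hxc⟩ y ⟨hy0, hyw, hyc⟩ a b ha hb hab
  -- cross complementarity
  have hpsd := hM (x - y)
  have hexp : (x - y) ⬝ᵥ M *ᵥ (x - y)
      = x ⬝ᵥ M *ᵥ x + y ⬝ᵥ M *ᵥ y - (x ⬝ᵥ M *ᵥ y + y ⬝ᵥ M *ᵥ x) := by
    simp [mulVec_sub, sub_dotProduct, dotProduct_sub]; ring
  have hx' : x ⬝ᵥ q + x ⬝ᵥ M *ᵥ x = 0 := by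
    have := hxc; rwa [dotProduct_add] at this
  have hy' : y ⬝ᵥ q + y ⬝ᵥ M *ᵥ y = 0 := by
    have := hyc; rwa [dotProduct_add] at this
  have hsum : x ⬝ᵥ (q + M *ᵥ y) + y ⬝ᵥ (q + M *ᵥ x) ≤ 0 := by
    rw [dotProduct_add, dotProduct_add]
    nlinarith [hpsd, hexp]
  have hx2 : 0 ≤ x ⬝ᵥ (q + M *ᵥ y) :=
    Finset.sum_nonneg fun i _ => mul_nonneg (hx0 i) (hyw i)
  have hy2 : 0 ≤ y ⬝ᵥ (q + M *ᵥ x) :=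
    Finset.sum_nonneg fun i _ => mul_nonneg (hy0 i) (hxw i)
  have hxy : x ⬝ᵥ (q + M *ᵥ y) = 0 := le_antisymm (by linarith) hx2
  have hyx : y ⬝ᵥ (q + M *ᵥ x) = 0 := le_antisymm (by linarith) hy2
  refine ⟨fun i => add_nonneg (mul_nonneg ha (hx0 i)) (mul_nonneg hb (hy0 i)),
    fun i => ?_, ?_⟩
  · have : (q + M *ᵥ (a • x + b • y)) i
        = a * (q + M *ᵥ x) i + b * (q + M *ᵥ y) i := by
      simp [mulVec_add, mulVec_smul]
      linear_combination (-(q i)) * hab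
    rw [this]
    exact add_nonneg (mul_nonneg ha (hxw i)) (mul_nonneg hb (hyw i))
  · have key : (a • x + b • y) ⬝ᵥ (q + M *ᵥ (a • x + b • y))
        = a * a * (x ⬝ᵥ (q + M *ᵥ x)) + a * b * (x ⬝ᵥ (q + M *ᵥ y))
        + b * a * (y ⬝ᵥ (q + M *ᵥ x)) + b * b * (y ⬝ᵥ (q + M *ᵥ y)) := by
      simp [mulVec_add, mulVec_smul, add_dotProduct, dotProduct_add,
        smul_dotProduct, dotProduct_smul, smul_eq_mul]
      linear_combination (-(a * (x ⬝ᵥ q)) - b * (y ⬝ᵥ q)) * hab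
    rw [key, hxc, hyc, hxy, hyx]; ring
end

section
/- (Infeasibility certificate, case (a) of the criss-cross method) Let M ∈ ℝ^{k×k}, q ∈ ℝ^k, and let B ⊆ {1,…,k} be a basis with dictionary Λ = -M_B^{-1} M_N and basic values λ* = M_B^{-1} q. If there exists a row index r with λ*_r < 0 and Λ_{r,j} ≤ 0 for all j, then the LCP w - Mz = q, w ≥ 0, z ≥ 0, wᵀz = 0 has no solution; in fact, there is no pair (w, z) with w - Mz = q and w, z ≥ 0. -/
open Matrix

/-- The basis matrix `M_B`: column `j` is the `j`-th identity column if `j ∈ B`,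
and the `j`-th column of `-M` otherwise. -/
def basisMat {k : ℕ} (M : Matrix (Fin k) (Fin k) ℝ) (B : Finset (Fin k)) :
    Matrix (Fin k) (Fin k) ℝ :=
  Matrix.of fun i j => if j ∈ B then (if i = j then (1 : ℝ) else 0) else -M i j

/-- The complementary matrix `M_N`: column `j` is `-M_j` if `j ∈ B`, `I_j` otherwise. -/
def complMat {k : ℕ} (M : Matrix (Fin k) (Fin k) ℝ) (B : Finset (Fin k)) :
    Matrix (Fin k) (Fin k) ℝ :=
  Matrix.of fun i j => if j ∈ B then -M i j else (if i = j then (1 : ℝ) else 0)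

theorem crisscross_infeasibility_certificate (k : ℕ)
    (M : Matrix (Fin k) (Fin k) ℝ) (q : Fin k → ℝ) (B : Finset (Fin k))
    (hB : IsUnit (basisMat M B).det)
    (Λ : Matrix (Fin k) (Fin k) ℝ) (hΛ : Λ = -((basisMat M B)⁻¹ * complMat M B))
    (lam : Fin k → ℝ) (hlam : lam = (basisMat M B)⁻¹ *ᵥ q)
    (r : Fin k) (hr : lam r < 0) (hrow : ∀ j, Λ r j ≤ 0) :
    ¬ ∃ w z : Fin k → ℝ, w - M *ᵥ z = q ∧ (∀ i, 0 ≤ w i) ∧ (∀ i, 0 ≤ z i) := by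
  rintro ⟨w, z, hq, hw, hz⟩
  set lB : Fin k → ℝ := fun i => if i ∈ B then w i else z i with hlB
  set lN : Fin k → ℝ := fun i => if i ∈ B then z i else w i with hlN
  have hkey : basisMat M B *ᵥ lB + complMat M B *ᵥ lN = q := by
    funext i
    have : ∀ j, basisMat M B i j * lB j + complMat M B i j * lN j
        = (if i = j then w j else 0) - M i j * z j := by
      intro j
      by_cases hj : j ∈ B <;> simp [basisMat, complMat, hj, hlB, hlN] <;> ring
    calc (basisMat M B *ᵥ lB + complMat M B *ᵥ lN) i
        = ∑ j, (basisMat M B i j * lB j + complMat M B i j * lN j) := by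
          simp [mulVec, dotProduct, Finset.sum_add_distrib]
      _ = ∑ j, ((if i = j then w j else 0) - M i j * z j) := by
          exact Finset.sum_congr rfl fun j _ => this j
      _ = w i - (M *ᵥ z) i := by
          simp [Finset.sum_sub_distrib, mulVec, dotProduct]
      _ = q i := by rw [← hq]; simp
  have hBl : basisMat M B *ᵥ lB = q - complMat M B *ᵥ lN := by
    rw [← hkey]; ring_nf
  have hinv : lB = lam + Λ *ᵥ lN := by
    have := congrArg (fun v => (basisMat M B)⁻¹ *ᵥ v) hBl
    simp only [mulVec_mulVec, Matrix.nonsing_inv_mul _ hB, one_mulVec] at this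
    rw [this, hlam, hΛ, mulVec_sub]
    simp [sub_eq_add_neg, mulVec_mulVec, neg_mulVec]
  have hsum : ∑ j, Λ r j * lN j ≤ 0 := by
    apply Finset.sum_nonpos
    intro j _
    apply mul_nonpos_of_nonpos_of_nonneg (hrow j)
    by_cases hj : j ∈ B <;> simp [hlN, hj, hw j, hz j]
  have h0 : 0 ≤ lB r := by
    by_cases hj : r ∈ B <;> simp [hlB, hj, hw r, hz r]
  have : lB r = lam r + ∑ j, Λ r j * lN j := by
    rw [hinv]; simp [mulVec, dotProduct]
  linarith [this ▸ h0]
end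

section
/- (Basis update lemma, diagonal pivot) Let M ∈ ℝ^{k×k}, B a basis (M_B invertible), Λ = -M_B^{-1}M_N the dictionary. If p ∈ [k] satisfies Λ_{pp} ≠ 0, then B' = B Δ {p} (symmetric difference) is again a basis, i.e., M_{B'} is invertible; indeed M_{B'} = M_B T where T agrees with the identity except column p equals -Λ_p, and det(T) = -Λ_{pp} ≠ 0. -/
open Matrix

theorem diagonal_pivot_basis_update (k : ℕ)
    (M : Matrix (Fin k) (Fin k) ℝ) (B : Finset (Fin k))
    (hB : IsUnit (basisMat M B).det)
    (Λ : Matrix (Fin k) (Fin k) ℝ) (hΛ : Λ = -((basisMat M B)⁻¹ * complMat M B))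
    (p : Fin k) (hp : Λ p p ≠ 0)
    (T : Matrix (Fin k) (Fin k) ℝ)
    (hT : T = Matrix.of fun i j =>
      if j = p then -Λ i p else (if i = j then (1 : ℝ) else 0)) :
    basisMat M (symmDiff B {p}) = basisMat M B * T ∧
    T.det = -Λ p p ∧
    IsUnit (basisMat M (symmDiff B {p})).det := by
  have hT' : T = (1 : Matrix (Fin k) (Fin k) ℝ).updateCol p (fun i => -Λ i p) := by
    subst hT
    ext i j
    by_cases hj : j = p <;>
      simp [Matrix.updateCol_apply, Matrix.one_apply, hj]
  have hdet : T.det = -Λ p p := by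
    rw [hT', ← Matrix.cramer_apply, Matrix.cramer_one]
    rfl
  have key : basisMat M B * Λ = -(complMat M B) := by
    rw [hΛ, Matrix.mul_neg, Matrix.mul_nonsing_inv_cancel_left _ _ hB]
  have hmul : basisMat M (symmDiff B {p}) = basisMat M B * T := by
    ext i j
    rw [Matrix.mul_apply]
    by_cases hj : j = p
    · subst hj
      have hsum : ∑ l, basisMat M B i l * T l j = complMat M B i j := by
        have : ∑ l, basisMat M B i l * T l j = -∑ l, basisMat M B i l * Λ l j := by
          rw [← Finset.sum_neg_distrib]
          refine Finset.sum_congr rfl fun l _ => ?_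
          simp [hT]
        rw [this]
        have := congrFun (congrFun key i) j
        rw [Matrix.mul_apply] at this
        simp only [Matrix.neg_apply] at this
        rw [this]; ring
      rw [hsum]
      by_cases hpB : j ∈ B <;>
        simp [basisMat, complMat, Finset.mem_symmDiff, hpB]
    · have hsum : ∑ l, basisMat M B i l * T l j = basisMat M B i j := by
        rw [Finset.sum_eq_single j]
        · simp [hT, hj]
        · intro l _ hl
          simp [hT, hj, hl]
        · simp
      rw [hsum]
      by_cases hjB : j ∈ B <;>
        simp [basisMat, Finset.mem_symmDiff, hjB, hj]
  refine ⟨hmul, hdet, ?_⟩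
  rw [hmul, Matrix.det_mul, hdet]
  exact hB.mul (isUnit_iff_ne_zero.mpr (neg_ne_zero.mpr hp))
end

section
/- (Piecewise linearity of the solution path) Suppose q(μ) = q₀ + μ q₁ and suppose that for each μ in an interval [μ_min, μ_max] there is a basis B(μ) from a finite collection ℬ of bases of M whose basic solution λ*_{B(μ)}(μ) = M_{B(μ)}^{-1} q(μ) is nonnegative. Then [μ_min, μ_max] can be partitioned into finitely many closed subintervals on each of which a single basis B ∈ ℬ is valid; on each such subinterval the map μ ↦ λ*_B(μ) is affine in μ. Hence the solution path defined by selecting, on each subinterval, the basic solution of its basis, is piecewise affine with at most |ℬ| pieces. -/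
open Matrix

/-- If finitely many closed sets cover `Ioc p c`, one of them contains `p` together with
a point strictly to the right of `p`. -/
lemma exists_two_point {ι : Type*} (s : Finset ι) (V : ι → Set ℝ)
    (hVc : ∀ B, IsClosed (V B)) (p c : ℝ) (hpc : p < c)
    (hcov : ∀ μ ∈ Set.Ioc p c, ∃ B ∈ s, μ ∈ V B) :
    ∃ B ∈ s, ∃ x, p < x ∧ x ≤ c ∧ p ∈ V B ∧ x ∈ V B := by
  classical
  by_contra hcon
  push_neg at hcon
  set g : ι → ℝ := fun B => sInf (V B ∩ Set.Icc p c) with hg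
  have hcomp : ∀ B, IsCompact (V B ∩ Set.Icc p c) := fun B => isCompact_Icc.inter_left (hVc B)
  have key : ∀ B ∈ s, ∀ x, x ∈ V B ∩ Set.Ioc p c →
      p < g B ∧ g B ∈ V B ∩ Set.Icc p c := by
    intro B hB x hx
    have hne : (V B ∩ Set.Icc p c).Nonempty := ⟨x, hx.1, hx.2.1.le, hx.2.2⟩
    have hmem : g B ∈ V B ∩ Set.Icc p c := (hcomp B).sInf_mem hne
    have hpV : p ∉ V B := fun hp => hcon B hB x hx.2.1 hx.2.2 hp hx.1
    have : g B ≠ p := fun h => hpV (h ▸ hmem.1)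
    exact ⟨lt_of_le_of_ne hmem.2.1 (Ne.symm this), hmem⟩
  set F := s.filter (fun B => (V B ∩ Set.Ioc p c).Nonempty) with hF
  have hFne : F.Nonempty := by
    obtain ⟨B₀, hB₀s, hB₀⟩ := hcov ((p + c) / 2) ⟨by linarith, by linarith⟩
    exact ⟨B₀, Finset.mem_filter.mpr ⟨hB₀s, ⟨(p + c) / 2, hB₀, by constructor <;> linarith⟩⟩⟩
  obtain ⟨Bm, hBmF, hBmin⟩ := F.exists_min_image g hFne
  have hBmF' := Finset.mem_filter.mp hBmF
  obtain ⟨x₀, hx₀⟩ := hBmF'.2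
  obtain ⟨hm1, hm2⟩ := key Bm hBmF'.1 x₀ hx₀
  set m := g Bm with hm
  have hμIoc : (p + m) / 2 ∈ Set.Ioc p c := ⟨by linarith, by have := hm2.2.2; linarith⟩
  obtain ⟨B₂, hB₂s, hB₂μ⟩ := hcov ((p + m) / 2) hμIoc
  have hB₂F : B₂ ∈ F := Finset.mem_filter.mpr ⟨hB₂s, ⟨(p + m) / 2, hB₂μ, hμIoc⟩⟩
  have hle : g B₂ ≤ (p + m) / 2 :=
    csInf_le (hcomp B₂).bddBelow ⟨hB₂μ, hμIoc.1.le, hμIoc.2⟩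
  have := hBmin B₂ hB₂F
  linarith

/-- A finite family of closed order-connected sets covering `[p, c]` yields a partition
into at most `s.card` closed subintervals, each inside a single member. -/
lemma cover_partition {ι : Type*} (V : ι → Set ℝ)
    (hVc : ∀ B, IsClosed (V B)) (hVo : ∀ B, (V B).OrdConnected) (c : ℝ) :
    ∀ (n : ℕ) (s : Finset ι), s.card ≤ n → ∀ p : ℝ, p ≤ c →
      (∀ μ ∈ Set.Icc p c, ∃ B ∈ s, μ ∈ V B) →
      ∃ (l : ℕ) (pts : ℕ → ℝ) (Bsel : ℕ → ι),
        0 < l ∧ l ≤ s.card ∧ pts 0 = p ∧ pts l = c ∧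
        (∀ j < l, pts j ≤ pts (j + 1)) ∧
        (∀ j < l, Bsel j ∈ s ∧ Set.Icc (pts j) (pts (j + 1)) ⊆ V (Bsel j)) := by
  intro n
  induction n with
  | zero =>
    intro s hs p hp hcov
    obtain ⟨B, hB, _⟩ := hcov p ⟨le_rfl, hp⟩
    rw [Finset.card_eq_zero.mp (Nat.le_zero.mp hs)] at hB
    exact absurd hB (Finset.notMem_empty B)
  | succ n IH =>
    intro s hs p hp hcov
    classical
    obtain ⟨B₀, hB₀s, hB₀p⟩ := hcov p ⟨le_rfl, hp⟩
    set F := s.filter (fun B => p ∈ V B) with hF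
    have hB₀F : B₀ ∈ F := Finset.mem_filter.mpr ⟨hB₀s, hB₀p⟩
    set T : ι → Set ℝ := fun B => V B ∩ Set.Icc p c with hT
    have hcomp : ∀ B, IsCompact (T B) := fun B => isCompact_Icc.inter_left (hVc B)
    obtain ⟨B, hBF, hBmax⟩ := F.exists_max_image (fun B => sSup (T B)) ⟨B₀, hB₀F⟩
    have hBs : B ∈ s := (Finset.mem_filter.mp hBF).1
    have hBp : p ∈ V B := (Finset.mem_filter.mp hBF).2
    have hTne : (T B).Nonempty := ⟨p, hBp, le_rfl, hp⟩
    set p' := sSup (T B) with hp'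
    have hp'mem : p' ∈ T B := (hcomp B).sSup_mem hTne
    have hpp' : p ≤ p' := hp'mem.2.1
    have hp'c : p' ≤ c := hp'mem.2.2
    have hub : ∀ μ ∈ T B, μ ≤ p' := fun μ h => le_csSup (hcomp B).bddAbove h
    have hseg : Set.Icc p p' ⊆ V B := (hVo B).out hBp hp'mem.1
    have hc1 : 1 ≤ s.card := Finset.card_pos.mpr ⟨B, hBs⟩
    by_cases hpc : p' = c
    · refine ⟨1, fun j => if j = 0 then p else c, fun _ => B, one_pos, hc1, by simp, by simp, ?_, ?_⟩
      · intro j hj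
        have hj0 : j = 0 := by omega
        subst hj0
        simpa using hp
      · intro j hj
        have hj0 : j = 0 := by omega
        subst hj0
        refine ⟨hBs, ?_⟩
        simpa [hpc] using hseg
    · have hp'lt : p' < c := lt_of_le_of_ne hp'c hpc
      have hcov' : ∀ μ ∈ Set.Ioc p' c, ∃ B' ∈ s, μ ∈ V B' := fun μ hμ =>
        hcov μ ⟨le_trans hpp' hμ.1.le, hμ.2⟩
      obtain ⟨B'', hB''s, x, hx1, hx2, hB''p', hB''x⟩ :=
        exists_two_point s V hVc p' c hp'lt hcov'
      have hBB : B'' ≠ B := by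
        intro h; subst h
        have : x ≤ p' := hub x ⟨hB''x, le_trans hpp' hx1.le, hx2⟩
        linarith
      set s' := s.erase B with hs'
      have hcardE : s'.card = s.card - 1 := Finset.card_erase_of_mem hBs
      have hcard' : s'.card ≤ n := by omega
      have hcovrec : ∀ μ ∈ Set.Icc p' c, ∃ B' ∈ s', μ ∈ V B' := by
        intro μ hμ
        rcases eq_or_lt_of_le hμ.1 with heq | hlt
        · exact ⟨B'', Finset.mem_erase.mpr ⟨hBB, hB''s⟩, heq ▸ hB''p'⟩
        · obtain ⟨B₂, hB₂s, hB₂μ⟩ := hcov μ ⟨le_trans hpp' hμ.1, hμ.2⟩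
          refine ⟨B₂, Finset.mem_erase.mpr ⟨?_, hB₂s⟩, hB₂μ⟩
          intro h; subst h
          have : μ ≤ p' := hub μ ⟨hB₂μ, le_trans hpp' hμ.1, hμ.2⟩
          linarith
      obtain ⟨l, pts, Bsel, hl0, hlcard, hpts0, hptsl, hmono, hpieces⟩ :=
        IH s' hcard' p' hp'c hcovrec
      refine ⟨l + 1, fun j => if j = 0 then p else pts (j - 1),
        fun j => if j = 0 then B else Bsel (j - 1), Nat.succ_pos l, by omega, by simp, ?_, ?_, ?_⟩
      · simp [hptsl]
      · intro j hj
        rcases Nat.eq_zero_or_pos j with h0 | hpos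
        · subst h0; simpa [hpts0] using hpp'
        · obtain ⟨j', rfl⟩ : ∃ j', j = j' + 1 := ⟨j - 1, by omega⟩
          simpa using hmono j' (by omega)
      · intro j hj
        rcases Nat.eq_zero_or_pos j with h0 | hpos
        · subst h0
          refine ⟨by simpa using hBs, ?_⟩
          simpa [hpts0] using hseg
        · obtain ⟨j', rfl⟩ : ∃ j', j = j' + 1 := ⟨j - 1, by omega⟩
          have hj' : j' < l := by omega
          refine ⟨by simpa using Finset.mem_of_mem_erase ((hpieces j' hj').1), ?_⟩
          simpa using (hpieces j' hj').2

theorem piecewise_linear_solution_path (k : ℕ)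
    (M : Matrix (Fin k) (Fin k) ℝ) (ℬ : Finset (Finset (Fin k)))
    (hbases : ∀ B ∈ ℬ, IsUnit (basisMat M B).det)
    (q₀ q₁ : Fin k → ℝ) (μmin μmax : ℝ) (hle : μmin ≤ μmax)
    (hcover : ∀ μ ∈ Set.Icc μmin μmax, ∃ B ∈ ℬ,
      ∀ i, 0 ≤ ((basisMat M B)⁻¹ *ᵥ (q₀ + μ • q₁)) i) :
    ∃ (l : ℕ) (pts : ℕ → ℝ) (Bsel : ℕ → Finset (Fin k)),
      0 < l ∧ l ≤ ℬ.card ∧ pts 0 = μmin ∧ pts l = μmax ∧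
      (∀ j < l, pts j ≤ pts (j + 1)) ∧
      (∀ j < l, Bsel j ∈ ℬ ∧
        (∀ μ ∈ Set.Icc (pts j) (pts (j + 1)),
          ∀ i, 0 ≤ ((basisMat M (Bsel j))⁻¹ *ᵥ (q₀ + μ • q₁)) i) ∧
        (∃ u v : Fin k → ℝ, ∀ μ : ℝ,
          (basisMat M (Bsel j))⁻¹ *ᵥ (q₀ + μ • q₁) = u + μ • v)) := by
  classical
  have haff : ∀ (B : Finset (Fin k)) (μ : ℝ),
      (basisMat M B)⁻¹ *ᵥ (q₀ + μ • q₁)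
        = (basisMat M B)⁻¹ *ᵥ q₀ + μ • ((basisMat M B)⁻¹ *ᵥ q₁) := by
    intro B μ
    rw [Matrix.mulVec_add, Matrix.mulVec_smul]
  set V : Finset (Fin k) → Set ℝ := fun B =>
    Set.Icc μmin μmax ∩
      ⋂ i, {μ : ℝ | 0 ≤ ((basisMat M B)⁻¹ *ᵥ q₀) i + μ * (((basisMat M B)⁻¹ *ᵥ q₁) i)}
    with hVdef
  have hmemV : ∀ B μ, μ ∈ V B ↔
      (μ ∈ Set.Icc μmin μmax ∧
        ∀ i, 0 ≤ ((basisMat M B)⁻¹ *ᵥ q₀) i + μ * (((basisMat M B)⁻¹ *ᵥ q₁) i)) := by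
    intro B μ
    simp [hVdef, Set.mem_iInter]
  have hform : ∀ (B : Finset (Fin k)) (μ : ℝ) (i : Fin k),
      ((basisMat M B)⁻¹ *ᵥ (q₀ + μ • q₁)) i
        = ((basisMat M B)⁻¹ *ᵥ q₀) i + μ * (((basisMat M B)⁻¹ *ᵥ q₁) i) := by
    intro B μ i
    rw [haff]
    simp [smul_eq_mul]
  have hVc : ∀ B, IsClosed (V B) := by
    intro B
    refine isClosed_Icc.inter (isClosed_iInter fun i => ?_)
    exact isClosed_le continuous_const (by fun_prop)
  have hVo : ∀ B, (V B).OrdConnected := by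
    intro B
    constructor
    intro x hx y hy z hz
    rw [hmemV] at hx hy ⊢
    refine ⟨⟨le_trans hx.1.1 hz.1, le_trans hz.2 hy.1.2⟩, fun i => ?_⟩
    have h1 := hx.2 i
    have h2 := hy.2 i
    rcases le_or_gt 0 (((basisMat M B)⁻¹ *ᵥ q₁) i) with hb | hb
    · nlinarith [mul_le_mul_of_nonneg_right hz.1 hb]
    · nlinarith [mul_le_mul_of_nonpos_right hz.2 hb.le]
  have hcov : ∀ μ ∈ Set.Icc μmin μmax, ∃ B ∈ ℬ, μ ∈ V B := by
    intro μ hμ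
    obtain ⟨B, hB, h⟩ := hcover μ hμ
    exact ⟨B, hB, (hmemV B μ).mpr ⟨hμ, fun i => (hform B μ i) ▸ h i⟩⟩
  obtain ⟨l, pts, Bsel, hl0, hlcard, hpts0, hptsl, hmono, hpieces⟩ :=
    cover_partition V hVc hVo μmax ℬ.card ℬ le_rfl μmin hle hcov
  refine ⟨l, pts, Bsel, hl0, hlcard, hpts0, hptsl, hmono, fun j hj => ?_⟩
  obtain ⟨hBmem, hsub⟩ := hpieces j hj
  refine ⟨hBmem, fun μ hμ i => ?_, ⟨_, _, haff (Bsel j)⟩⟩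
  have := ((hmemV (Bsel j) μ).mp (hsub hμ)).2 i
  rw [hform]
  exact this
end
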